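/- For the choice $\delta_d = (d - 3/2)^{-1/2}$ (so that $\delta_d \approx 1/\sqrt{d}$ for large $d$), the token-assignment probability $p_{\delta_d} = 1 - I_{\delta_d^2}\big(\tfrac{1}{2}, \tfrac{d-1}{2}\big)$ satisfies $\lim_{d \to \infty} p_{\delta_d} = 1 - \operatorname{erf}\big(\tfrac{\sqrt{2}}{2}\big) = \frac{2}{\sqrt{\pi}}\int_{1/\sqrt{2}}^{\infty} e^{-u^2}\,du \approx 0.3$, where $I_x(a,b) = \frac{1}{B(a,b)}\int_0^x t^{a-1}(1-t)^{b-1}\,dt$ and $\operatorname{erf}(x) = \frac{2}{\sqrt{\pi}}\int_0^x e^{-u^2}du$. -/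

import Mathlib

open Filter Real MeasureTheory Set

lemma aux_tendsto_c : Tendsto (fun d : ℕ => (d:ℝ) - 3/2) atTop atTop :=
  tendsto_atTop_add_const_right _ _ tendsto_natCast_atTop_atTop

lemma aux_ptwise (u : ℝ) :
    Tendsto (fun d : ℕ => (1 - u^2/((d:ℝ) - 3/2)) ^ (((d:ℝ)-3)/2)) atTop
      (nhds (Real.exp (-u^2/2))) := by
  have hc := aux_tendsto_c
  have h1 : Tendsto (fun d : ℕ => (1 + (-u^2)/((d:ℝ)-3/2)) ^ ((d:ℝ)-3/2)) atTop
      (nhds (Real.exp (-u^2))) := (tendsto_one_add_div_rpow_exp (-u^2)).comp hc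
  have h2 : Tendsto (fun d : ℕ => (((d:ℝ)-3)/2)/((d:ℝ)-3/2)) atTop (nhds (1/2)) := by
    have h3 : Tendsto (fun d : ℕ => (3:ℝ)/(d:ℝ)) atTop (nhds 0) :=
      tendsto_const_div_atTop_nhds_zero_nat 3
    have h4 : Tendsto (fun d : ℕ => (1 - 3/(d:ℝ))/(2 - 3/(d:ℝ))) atTop (nhds ((1-0)/(2-0))) :=
      Tendsto.div (tendsto_const_nhds.sub h3) (tendsto_const_nhds.sub h3) (by norm_num)
    rw [show ((1:ℝ)-0)/(2-0) = 1/2 by norm_num] at h4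
    apply h4.congr'
    filter_upwards [eventually_ge_atTop 4] with d hd
    have hd' : (4:ℝ) ≤ (d:ℝ) := by exact_mod_cast hd
    have hd0 : (d:ℝ) ≠ 0 := by linarith
    field_simp
  have h5 := h1.rpow h2 (Or.inl (Real.exp_ne_zero _))
  have h6 : (Real.exp (-u^2)) ^ ((1:ℝ)/2) = Real.exp (-u^2/2) := by
    rw [← Real.exp_mul]; ring_nf
  rw [h6] at h5
  apply h5.congr'
  filter_upwards [hc.eventually_ge_atTop (max 1 (u^2))] with d hd
  have hc1 : (1:ℝ) ≤ (d:ℝ) - 3/2 := le_trans (le_max_left _ _) hd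
  have hcu : u^2 ≤ (d:ℝ) - 3/2 := le_trans (le_max_right _ _) hd
  have hc0 : (0:ℝ) < (d:ℝ) - 3/2 := by linarith
  have hbase : (0:ℝ) ≤ 1 + (-u^2)/((d:ℝ)-3/2) := by
    have : u^2/((d:ℝ)-3/2) ≤ 1 := (div_le_one hc0).2 hcu
    rw [neg_div]; linarith
  rw [← Real.rpow_mul hbase]
  rw [show ((d:ℝ)-3/2) * ((((d:ℝ)-3)/2)/((d:ℝ)-3/2)) = ((d:ℝ)-3)/2 by
    rw [mul_comm]; exact div_mul_cancel₀ _ hc0.ne']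
  rw [neg_div, ← sub_eq_add_neg]

lemma aux_cov {c a : ℝ} (p : ℝ) (hc : 0 < c) (ha : 0 < a) (hac : a^2 ≤ c) :
    ∫ t in (0:ℝ)..(a^2/c), t ^ (-(1:ℝ)/2) * (1-t)^p
      = (2/Real.sqrt c) * ∫ u in Set.Ioo (0:ℝ) a, (1 - u^2/c)^p := by
  have hsc : (0:ℝ) < Real.sqrt c := Real.sqrt_pos.2 hc
  have himg : (fun u : ℝ => u^2/c) '' Set.Ioo 0 a = Set.Ioo 0 (a^2/c) := by
    ext y
    simp only [Set.mem_image, Set.mem_Ioo]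
    constructor
    · rintro ⟨x, ⟨hx0, hxa⟩, rfl⟩
      refine ⟨by positivity, ?_⟩
      have hx2 : x^2 < a^2 := by nlinarith
      rw [div_lt_div_iff₀ hc hc]; nlinarith
    · rintro ⟨hy0, hy1⟩
      refine ⟨Real.sqrt (c*y), ⟨Real.sqrt_pos.2 (by positivity), ?_⟩, ?_⟩
      · rw [show a = Real.sqrt (a^2) from (Real.sqrt_sq ha.le).symm]
        apply Real.sqrt_lt_sqrt (by positivity)
        calc c * y < c * (a^2/c) := by exact (mul_lt_mul_iff_right₀ hc).2 hy1
          _ = a^2 := by field_simp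
      · rw [Real.sq_sqrt (by positivity)]
        field_simp
  have hderiv : ∀ x ∈ Set.Ioo (0:ℝ) a,
      HasDerivWithinAt (fun u : ℝ => u^2/c) (2*x/c) (Set.Ioo 0 a) x := by
    intro x _
    have := (hasDerivAt_pow 2 x).div_const c
    simpa using this.hasDerivWithinAt
  have hinj : Set.InjOn (fun u : ℝ => u^2/c) (Set.Ioo 0 a) := by
    intro u hu v hv h
    simp only at h
    have h2 : u^2 = v^2 := by
      field_simp at h; exact h
    have h3 : (u - v) * (u + v) = 0 := by linear_combination h2
    rcases mul_eq_zero.1 h3 with h4 | h4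
    · linarith
    · exfalso; have := hu.1; have := hv.1; simp only [Set.mem_Ioo] at *; linarith
  have key := integral_image_eq_integral_abs_deriv_smul measurableSet_Ioo hderiv hinj
      (fun t : ℝ => t ^ (-(1:ℝ)/2) * (1-t)^p)
  rw [himg] at key
  have h0le : (0:ℝ) ≤ a^2/c := by positivity
  rw [intervalIntegral.integral_of_le h0le, MeasureTheory.integral_Ioc_eq_integral_Ioo, key]
  rw [← MeasureTheory.integral_const_mul]
  apply MeasureTheory.setIntegral_congr_fun measurableSet_Ioo
  intro x hx
  simp only [Set.mem_Ioo] at hx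
  obtain ⟨hx0, hxa⟩ := hx
  have hxc : (0:ℝ) < x^2/c := by positivity
  have hr : (x^2/c) ^ (-(1:ℝ)/2) = Real.sqrt c / x := by
    rw [show (-(1:ℝ)/2) = -(1/2) by norm_num, Real.rpow_neg hxc.le, ← Real.sqrt_eq_rpow,
      Real.sqrt_div (sq_nonneg x), Real.sqrt_sq hx0.le, inv_div]
  simp only [smul_eq_mul]
  rw [hr, abs_of_pos (by positivity : (0:ℝ) < 2*x/c), ← mul_assoc]
  congr 1
  field_simp
  nlinarith [Real.mul_self_sqrt hc.le]

lemma aux_meas (c q : ℝ) : Measurable (fun u : ℝ => (1 - u^2/c) ^ q) := by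
  measurability

lemma aux_numlim :
    Tendsto (fun d : ℕ => ∫ u in (0:ℝ)..1, (1 - u^2/((d:ℝ)-3/2)) ^ (((d:ℝ)-3)/2)) atTop
      (nhds (∫ u in (0:ℝ)..1, Real.exp (-u^2/2))) := by
  apply intervalIntegral.tendsto_integral_filter_of_dominated_convergence
    (bound := fun _ => (1:ℝ))
  · exact Eventually.of_forall fun d => (aux_meas _ _).aestronglyMeasurable
  · filter_upwards [eventually_ge_atTop 4] with d hd
    have hd' : (4:ℝ) ≤ (d:ℝ) := by exact_mod_cast hd
    apply Eventually.of_forall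
    intro x hx
    rw [Set.uIoc_of_le (by norm_num : (0:ℝ) ≤ 1)] at hx
    obtain ⟨hx0, hx1⟩ := hx
    have hc0 : (0:ℝ) < (d:ℝ) - 3/2 := by linarith
    have h0 : (0:ℝ) ≤ 1 - x^2/((d:ℝ)-3/2) := by
      have h1 : x^2 ≤ 1 := by nlinarith
      have : x^2/((d:ℝ)-3/2) ≤ 1 := by
        rw [div_le_one hc0]; linarith
      linarith
    have h1 : 1 - x^2/((d:ℝ)-3/2) ≤ 1 := by
      have : (0:ℝ) ≤ x^2/((d:ℝ)-3/2) := by positivity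
      linarith
    rw [Real.norm_eq_abs, abs_of_nonneg (Real.rpow_nonneg h0 _)]
    exact Real.rpow_le_one h0 h1 (by linarith)
  · exact intervalIntegrable_const
  · exact Eventually.of_forall fun x _ => aux_ptwise x

lemma aux_denlim :
    Tendsto (fun d : ℕ => ∫ u in Set.Ioc (0:ℝ) (Real.sqrt ((d:ℝ)-3/2)),
        (1 - u^2/((d:ℝ)-3/2)) ^ (((d:ℝ)-3)/2)) atTop
      (nhds (Real.sqrt (2*π)/2)) := by
  have hJ : (∫ x in Set.Ioi (0:ℝ), Real.exp (-x^2/2)) = Real.sqrt (2*π)/2 := by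
    have := integral_gaussian_Ioi (1/2)
    rw [show π/(1/2:ℝ) = 2*π by ring] at this
    rw [← this]
    apply setIntegral_congr_fun measurableSet_Ioi
    intro x _
    ring_nf
  rw [← hJ]
  have key : Tendsto (fun d : ℕ => ∫ x in Set.Ioi (0:ℝ),
      (Set.Ioc (0:ℝ) (Real.sqrt ((d:ℝ)-3/2))).indicator
        (fun u => (1 - u^2/((d:ℝ)-3/2)) ^ (((d:ℝ)-3)/2)) x) atTop
      (nhds (∫ x in Set.Ioi (0:ℝ), Real.exp (-x^2/2))) := by
    apply MeasureTheory.tendsto_integral_filter_of_dominated_convergence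
      (bound := fun x => Real.exp (-(1/4) * x^2))
    · exact Eventually.of_forall fun d =>
        ((aux_meas _ _).indicator measurableSet_Ioc).aestronglyMeasurable
    · filter_upwards [eventually_ge_atTop 5] with d hd
      have hd' : (5:ℝ) ≤ (d:ℝ) := by exact_mod_cast hd
      have hc0 : (0:ℝ) < (d:ℝ) - 3/2 := by linarith
      apply Eventually.of_forall
      intro x
      by_cases hx : x ∈ Set.Ioc (0:ℝ) (Real.sqrt ((d:ℝ)-3/2))
      · rw [Set.indicator_of_mem hx]
        obtain ⟨hx0, hxs⟩ := hx
        have hx2 : x^2 ≤ (d:ℝ)-3/2 := by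
          nlinarith [Real.sq_sqrt hc0.le, Real.sqrt_nonneg ((d:ℝ)-3/2)]
        have h0 : (0:ℝ) ≤ 1 - x^2/((d:ℝ)-3/2) := by
          have : x^2/((d:ℝ)-3/2) ≤ 1 := by rw [div_le_one hc0]; linarith
          linarith
        have hp : (0:ℝ) ≤ ((d:ℝ)-3)/2 := by linarith
        rw [Real.norm_eq_abs, abs_of_nonneg (Real.rpow_nonneg h0 _)]
        calc (1 - x^2/((d:ℝ)-3/2)) ^ (((d:ℝ)-3)/2)
            ≤ (Real.exp (-(x^2/((d:ℝ)-3/2)))) ^ (((d:ℝ)-3)/2) := by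
              apply Real.rpow_le_rpow h0 _ hp
              linarith [Real.add_one_le_exp (-(x^2/((d:ℝ)-3/2)))]
          _ = Real.exp (-(x^2/((d:ℝ)-3/2)) * (((d:ℝ)-3)/2)) := (Real.exp_mul _ _).symm
          _ ≤ Real.exp (-(1/4) * x^2) := by
              apply Real.exp_le_exp.2
              rw [neg_mul, neg_mul, neg_le_neg_iff,
                show x^2/((d:ℝ)-3/2) * (((d:ℝ)-3)/2)
                    = x^2 * (((d:ℝ)-3)/2) / ((d:ℝ)-3/2) from by ring,
                le_div_iff₀ hc0]
              nlinarith [sq_nonneg x]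
      · rw [Set.indicator_of_notMem hx]
        simp only [norm_zero]
        positivity
    · exact (integrable_exp_neg_mul_sq (by norm_num : (0:ℝ) < 1/4)).restrict
    · apply (ae_restrict_iff' measurableSet_Ioi).2
      apply Eventually.of_forall
      intro x hx
      have hx0 : (0:ℝ) < x := hx
      apply (aux_ptwise x).congr'
      filter_upwards [aux_tendsto_c.eventually_ge_atTop (x^2)] with d hd
      have hd2 : x ≤ Real.sqrt ((d:ℝ) - 3/2) := by
        calc x = Real.sqrt (x^2) := (Real.sqrt_sq hx0.le).symm
          _ ≤ _ := Real.sqrt_le_sqrt hd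
      rw [Set.indicator_of_mem (Set.mem_Ioc.mpr ⟨hx0, hd2⟩)]
  apply key.congr
  intro d
  rw [MeasureTheory.setIntegral_indicator measurableSet_Ioc,
    Set.inter_eq_self_of_subset_right Set.Ioc_subset_Ioi_self]

/-- For `δ_d = (d - 3/2)^{-1/2} ≈ 1/√d`, the token-assignment probability
`p_{δ_d} = 1 - I_{δ_d²}(1/2, (d-1)/2)` tends to `1 - erf(√2/2) ≈ 0.3` as `d → ∞`,
with `erf` written out in integral form (Lemma 3 and Appendix A.2). -/
theorem assignment_probability_limit :
    Tendsto (fun d : ℕ =>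
        1 - (∫ t in (0:ℝ)..((d:ℝ) - 3/2)⁻¹,
              t ^ (-(1:ℝ)/2) * (1 - t) ^ (((d:ℝ) - 3)/2)) /
            (∫ t in (0:ℝ)..1, t ^ (-(1:ℝ)/2) * (1 - t) ^ (((d:ℝ) - 3)/2)))
      atTop
      (nhds (1 - (2 / Real.sqrt π) *
        ∫ u in (0:ℝ)..(Real.sqrt 2 / 2), Real.exp (-u ^ 2))) := by
  have hA : Tendsto (fun d : ℕ => ∫ u in Set.Ioo (0:ℝ) 1,
      (1 - u^2/((d:ℝ)-3/2)) ^ (((d:ℝ)-3)/2)) atTop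
      (nhds (∫ u in (0:ℝ)..1, Real.exp (-u^2/2))) := by
    apply aux_numlim.congr
    intro d
    rw [intervalIntegral.integral_of_le zero_le_one,
      MeasureTheory.integral_Ioc_eq_integral_Ioo]
  have hG : Tendsto (fun d : ℕ => ∫ u in Set.Ioo (0:ℝ) (Real.sqrt ((d:ℝ)-3/2)),
      (1 - u^2/((d:ℝ)-3/2)) ^ (((d:ℝ)-3)/2)) atTop
      (nhds (Real.sqrt (2*π)/2)) := by
    apply aux_denlim.congr
    intro d
    rw [MeasureTheory.integral_Ioc_eq_integral_Ioo]
  have hJne : Real.sqrt (2*π)/2 ≠ 0 := by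
    have := Real.pi_pos
    positivity
  have hT := Tendsto.const_sub (1:ℝ) (hA.div hG hJne)
  have hval : 1 - (∫ u in (0:ℝ)..1, Real.exp (-u^2/2)) / (Real.sqrt (2*π)/2)
      = 1 - (2 / Real.sqrt π) * ∫ u in (0:ℝ)..(Real.sqrt 2 / 2), Real.exp (-u ^ 2) := by
    have h2 : Real.sqrt 2 ≠ 0 := by positivity
    have hpne : Real.sqrt π ≠ 0 := by
      have := Real.pi_pos; positivity
    have hI : (∫ u in (0:ℝ)..1, Real.exp (-u^2/2))
        = Real.sqrt 2 * ∫ u in (0:ℝ)..(Real.sqrt 2 / 2), Real.exp (-u ^ 2) := by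
      have h := intervalIntegral.integral_comp_div (a := (0:ℝ)) (b := 1)
        (fun x : ℝ => Real.exp (-x^2)) h2
      have hint : ∀ x : ℝ, Real.exp (-(x/Real.sqrt 2)^2) = Real.exp (-x^2/2) := by
        intro x
        rw [div_pow, Real.sq_sqrt (by norm_num : (0:ℝ) ≤ 2), neg_div]
      rw [intervalIntegral.integral_congr (g := fun x : ℝ => Real.exp (-x^2/2))
        (fun x _ => hint x)] at h
      rw [h, zero_div, smul_eq_mul]
      congr 2
      rw [div_eq_div_iff (by positivity) (by norm_num : (2:ℝ) ≠ 0), one_mul,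
        Real.mul_self_sqrt (by norm_num : (0:ℝ) ≤ 2)]
    rw [hI]
    congr 1
    rw [Real.sqrt_mul (by norm_num : (0:ℝ) ≤ 2)]
    field_simp
  rw [hval] at hT
  apply hT.congr'
  filter_upwards [eventually_ge_atTop 4] with d hd
  have hd' : (4:ℝ) ≤ (d:ℝ) := by exact_mod_cast hd
  have hc0 : (0:ℝ) < (d:ℝ) - 3/2 := by linarith
  have hnum := aux_cov (c := (d:ℝ)-3/2) (a := 1) (((d:ℝ)-3)/2) hc0 one_pos
    (by nlinarith : (1:ℝ)^2 ≤ (d:ℝ)-3/2)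
  rw [one_pow, one_div] at hnum
  have hsq : (Real.sqrt ((d:ℝ)-3/2))^2 = (d:ℝ)-3/2 := Real.sq_sqrt hc0.le
  have hden := aux_cov (c := (d:ℝ)-3/2) (a := Real.sqrt ((d:ℝ)-3/2)) (((d:ℝ)-3)/2)
    hc0 (Real.sqrt_pos.2 hc0) (by rw [hsq])
  rw [hsq, div_self hc0.ne'] at hden
  have hne : 2/Real.sqrt ((d:ℝ)-3/2) ≠ 0 := by positivity
  rw [hnum, hden, mul_div_mul_left _ _ hne]
  simp only [Pi.div_apply]
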